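/- For every integer N ≥ 0, the trace of the ℚ-linear endomorphism σ of the space of homogeneous polynomials of degree N in ℚ[X,Y] defined by (σP)(X,Y) = P(Y, −X−Y) equals 1 if N ≡ 0 (mod 3), equals −1 if N ≡ 1 (mod 3), and equals 0 if N ≡ 2 (mod 3). -/

import Mathlib

noncomputable section

open MvPolynomial Finset Finset.Nat

namespace TraceCyclicAux

lemma degree_fin2 (m : Fin 2 →₀ ℕ) : m.degree = m 0 + m 1 := by
  rw [Finsupp.degree_apply,
    Finset.sum_subset (Finset.subset_univ _)
      (fun i _ hi => Finsupp.notMem_support_iff.mp hi),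
    Fin.sum_univ_two]

lemma fin2_eq (m : Fin 2 →₀ ℕ) :
    m = Finsupp.single 0 (m 0) + Finsupp.single 1 (m 1) := by
  ext i
  fin_cases i <;> simp [Finsupp.single_apply]

variable (N : ℕ)

/-- exponent of i-th basis monomial -/
def mexp (i : Fin (N + 1)) : Fin 2 →₀ ℕ :=
  Finsupp.single 0 (i : ℕ) + Finsupp.single 1 (N - (i : ℕ))

lemma mexp_apply0 (i : Fin (N + 1)) : mexp N i 0 = (i : ℕ) := by
  simp [mexp, Finsupp.single_apply]

lemma mexp_apply1 (i : Fin (N + 1)) : mexp N i 1 = N - (i : ℕ) := by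
  simp [mexp, Finsupp.single_apply]

lemma degree_mexp (i : Fin (N + 1)) : (mexp N i).degree = N := by
  rw [degree_fin2, mexp_apply0, mexp_apply1]
  omega

lemma mexp_injective : Function.Injective (mexp N) := by
  intro i j h
  have := congrArg (fun f => f 0) h
  simp only [mexp_apply0] at this
  exact Fin.ext this

/-- The i-th basis vector of the homogeneous submodule. -/
def bvec (i : Fin (N + 1)) : homogeneousSubmodule (Fin 2) ℚ N :=
  ⟨monomial (mexp N i) 1,
    (mem_homogeneousSubmodule _ _).mpr (isHomogeneous_monomial _ (degree_mexp N i))⟩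

lemma bvec_coe (i : Fin (N + 1)) :
    (bvec N i : MvPolynomial (Fin 2) ℚ) = monomial (mexp N i) 1 := rfl

lemma bvec_indep : LinearIndependent ℚ (bvec N) := by
  apply LinearIndependent.of_comp (Submodule.subtype _)
  have h := (basisMonomials (Fin 2) ℚ).linearIndependent.comp (mexp N) (mexp_injective N)
  simpa [coe_basisMonomials, Function.comp_def, bvec_coe] using h

lemma bvec_span : ⊤ ≤ Submodule.span ℚ (Set.range (bvec N)) := by
  rintro ⟨q, hq⟩ -
  have hdeg : ∀ m ∈ q.support, m.degree = N := by
    intro m hm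
    by_contra hne
    exact (mem_support_iff.mp hm) (((mem_homogeneousSubmodule _ _).mp hq).coeff_eq_zero hne)
  -- index function
  have hx : (⟨q, hq⟩ : homogeneousSubmodule (Fin 2) ℚ N)
      = ∑ m ∈ q.support.attach,
          coeff m.1 q • bvec N ⟨m.1 0, by
            have := hdeg m.1 m.2
            have h0 : m.1 0 ≤ N := by
              rw [← this]; exact Finsupp.le_degree _ _
            omega⟩ := by
    refine Subtype.ext ?_
    rw [Submodule.coe_sum]
    simp only [SetLike.val_smul]
    show q = _
    conv_lhs => rw [← support_sum_monomial_coeff q, ← Finset.sum_attach q.support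
      (fun m => monomial m (coeff m q))]
    refine Finset.sum_congr rfl fun m _ => ?_
    rw [bvec_coe, smul_monomial, smul_eq_mul, mul_one]
    congr 1
    have hd := hdeg m.1 m.2
    rw [degree_fin2] at hd
    rw [mexp]
    conv_lhs => rw [fin2_eq m.1]
    simp only [Fin.val_mk]
    have h1 : (m.1 : Fin 2 →₀ ℕ) 1 = N - m.1 0 := by omega
    rw [h1]
  rw [hx]
  exact Submodule.sum_mem _ fun m _ =>
    Submodule.smul_mem _ _ (Submodule.subset_span ⟨_, rfl⟩)

def bas : Module.Basis (Fin (N + 1)) ℚ (homogeneousSubmodule (Fin 2) ℚ N) :=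
  Module.Basis.mk (bvec_indep N) (bvec_span N)

lemma bas_apply (i : Fin (N + 1)) : bas N i = bvec N i := Module.Basis.mk_apply _ _ _

/-- key polynomial identity -/
lemma key_poly (i : Fin (N + 1)) :
    aeval ![X 1, -X 0 - X 1] ((monomial (mexp N i) 1 : MvPolynomial (Fin 2) ℚ))
      = ∑ j : Fin (N + 1),
          ((-1 : ℚ) ^ (N - (i : ℕ)) * ((N - (i : ℕ)).choose (j : ℕ) : ℚ))
            • (monomial (mexp N j) 1 : MvPolynomial (Fin 2) ℚ) := by
  have hiN : (i : ℕ) ≤ N := Nat.lt_succ_iff.mp i.isLt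
  set M := N - (i : ℕ) with hM
  have mon_eq : ∀ j : Fin (N + 1), (monomial (mexp N j) 1 : MvPolynomial (Fin 2) ℚ)
      = X 0 ^ (j : ℕ) * X 1 ^ (N - (j : ℕ)) := fun j => by
    rw [mexp, monomial_single_add, ← X_pow_eq_monomial]
  rw [mon_eq i, map_mul, map_pow, map_pow, aeval_X, aeval_X]
  simp only [Matrix.cons_val_zero, Matrix.cons_val_one, Matrix.head_cons]
  have hneg : (-X 0 - X 1 : MvPolynomial (Fin 2) ℚ) = -(X 0 + X 1) := by ring
  rw [hneg, neg_pow, add_pow, Finset.mul_sum, Finset.mul_sum]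
  simp only [mon_eq]
  rw [Fin.sum_univ_eq_sum_range
    (fun k => ((-1 : ℚ) ^ M * ((M.choose k : ℚ))) • (X 0 ^ k * X 1 ^ (N - k)
      : MvPolynomial (Fin 2) ℚ))]
  rw [← Finset.sum_subset (Finset.range_subset_range.mpr (by omega : M + 1 ≤ N + 1))
    (fun k _ hk' => by
      have : M < k := by simpa using hk'
      rw [Nat.choose_eq_zero_of_lt this]
      simp)]
  refine Finset.sum_congr rfl fun k hk => ?_
  have hk' : k ≤ M := Nat.lt_succ_iff.mp (Finset.mem_range.mp hk)
  have hexp : N - k = (i : ℕ) + (M - k) := by omega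
  rw [hexp, pow_add]
  simp only [smul_eq_C_mul, map_mul, map_pow, map_neg, map_one, map_natCast]
  ring

noncomputable def Tsum (n : ℕ) : ℚ :=
  ∑ p ∈ Finset.HasAntidiagonal.antidiagonal n, (-1 : ℚ) ^ p.2 * (p.2.choose p.1 : ℚ)

theorem trace_eq : ∀ (σ : homogeneousSubmodule (Fin 2) ℚ N →ₗ[ℚ] homogeneousSubmodule (Fin 2) ℚ N),
    (∀ P : homogeneousSubmodule (Fin 2) ℚ N,
      (σ P : MvPolynomial (Fin 2) ℚ) = aeval ![X 1, -X 0 - X 1] (P : MvPolynomial (Fin 2) ℚ)) →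
    LinearMap.trace ℚ _ σ = Tsum N := by
  intro σ hσ
  have hσB : ∀ i : Fin (N + 1), σ (bas N i)
      = ∑ j : Fin (N + 1),
          ((-1 : ℚ) ^ (N - (i : ℕ)) * ((N - (i : ℕ)).choose (j : ℕ) : ℚ)) • bas N j := by
    intro i
    refine Subtype.ext ?_
    rw [hσ (bas N i), Submodule.coe_sum]
    simp only [SetLike.val_smul, bas_apply, bvec_coe]
    exact key_poly N i
  rw [LinearMap.trace_eq_matrix_trace ℚ (bas N) σ, Matrix.trace]
  have hdiag : ∀ i : Fin (N + 1),
      (LinearMap.toMatrix (bas N) (bas N) σ).diag i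
        = (-1 : ℚ) ^ (N - (i : ℕ)) * ((N - (i : ℕ)).choose (i : ℕ) : ℚ) := by
    intro i
    rw [Matrix.diag_apply, LinearMap.toMatrix_apply, hσB i, Module.Basis.repr_sum_self]
  rw [Finset.sum_congr rfl (fun i _ => hdiag i)]
  rw [Fin.sum_univ_eq_sum_range (fun k => (-1 : ℚ) ^ (N - k) * ((N - k).choose k : ℚ))]
  rw [Tsum, ← Finset.Nat.sum_antidiagonal_eq_sum_range_succ_mk
    (fun p => (-1 : ℚ) ^ p.2 * (p.2.choose p.1 : ℚ))]

lemma Tsum_zero : Tsum 0 = 1 := by simp [Tsum]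

lemma Tsum_one : Tsum 1 = -1 := by
  rw [Tsum, Finset.Nat.sum_antidiagonal_succ]; simp

lemma Tsum_rec (n : ℕ) : Tsum (n + 2) = -Tsum (n + 1) - Tsum n := by
  have h1 : Tsum (n + 2)
      = (-1 : ℚ) ^ (n + 2) * ((n+2).choose 0 : ℚ)
        + ∑ p ∈ antidiagonal (n + 1), (-1 : ℚ) ^ p.2 * ((p.2.choose (p.1 + 1)) : ℚ) := by
    rw [Tsum, sum_antidiagonal_succ (n := n + 1)]
  have h2 : ∑ p ∈ antidiagonal (n + 1), (-1 : ℚ) ^ p.2 * ((p.2.choose (p.1 + 1)) : ℚ)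
      = (-1 : ℚ) ^ 0 * (((0:ℕ).choose (n + 2)) : ℚ)
        + ∑ p ∈ antidiagonal n, (-1 : ℚ) ^ (p.2 + 1) * (((p.2+1).choose (p.1 + 1)) : ℚ) := by
    rw [sum_antidiagonal_succ' (n := n)
      (f := fun p => (-1 : ℚ) ^ p.2 * ((p.2.choose (p.1 + 1)) : ℚ))]
  have h3 : Tsum (n + 1)
      = (-1 : ℚ) ^ (n + 1) * ((n+1).choose 0 : ℚ)
        + ∑ p ∈ antidiagonal n, (-1 : ℚ) ^ p.2 * ((p.2.choose (p.1 + 1)) : ℚ) := by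
    rw [Tsum, sum_antidiagonal_succ (n := n)]
  have h4 : ∑ p ∈ antidiagonal n, (-1 : ℚ) ^ (p.2 + 1) * (((p.2+1).choose (p.1 + 1)) : ℚ)
      = ∑ p ∈ antidiagonal n, (-((-1 : ℚ) ^ p.2 * ((p.2.choose p.1) : ℚ))
          - (-1 : ℚ) ^ p.2 * ((p.2.choose (p.1 + 1)) : ℚ)) := by
    refine Finset.sum_congr rfl fun p _ => ?_
    rw [Nat.choose_succ_succ]
    push_cast
    ring
  rw [h1, h2, h4, Finset.sum_sub_distrib, Finset.sum_neg_distrib, h3, ← Tsum]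
  simp
  ring

lemma Tsum_eq (n : ℕ) : Tsum n = if n % 3 = 0 then 1 else if n % 3 = 1 then -1 else 0 := by
  induction n using Nat.strong_induction_on with
  | _ n ih =>
    match n with
    | 0 => simpa using Tsum_zero
    | 1 => simpa using Tsum_one
    | (n + 2) =>
      rw [Tsum_rec, ih (n + 1) (by omega), ih n (by omega)]
      have h3 : n % 3 = 0 ∨ n % 3 = 1 ∨ n % 3 = 2 := by omega
      rcases h3 with h | h | h <;>
        · have e1 : (n + 1) % 3 = (n % 3 + 1) % 3 := by omega
          have e2 : (n + 2) % 3 = (n % 3 + 2) % 3 := by omega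
          rw [e1, e2, h]
          norm_num

end TraceCyclicAux


/-- The trace of the endomorphism `σ : P(X,Y) ↦ P(Y, -X-Y)` of the space of
homogeneous polynomials of degree `N` in `ℚ[X,Y]` equals `1` if `N ≡ 0 (mod 3)`,
`-1` if `N ≡ 1 (mod 3)`, and `0` if `N ≡ 2 (mod 3)`. -/
theorem trace_cyclic_substitution (N : ℕ)
    (σ : homogeneousSubmodule (Fin 2) ℚ N →ₗ[ℚ] homogeneousSubmodule (Fin 2) ℚ N)
    (hσ : ∀ P : homogeneousSubmodule (Fin 2) ℚ N,
      (σ P : MvPolynomial (Fin 2) ℚ) = aeval ![X 1, -X 0 - X 1] (P : MvPolynomial (Fin 2) ℚ)) :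
    LinearMap.trace ℚ _ σ =
      if N % 3 = 0 then 1 else if N % 3 = 1 then -1 else 0 := by
  rw [TraceCyclicAux.trace_eq N σ hσ, TraceCyclicAux.Tsum_eq]

end
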